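/- There exists a constant K > 0 such that for every s ∈ ℕ and every root y₀ of He_{s+1}, the Lagrange basis polynomial L_{s;y₀} satisfies Σ_{ℓ=0}^{s} |coeff_ℓ(L_{s;y₀})| ≤ e^{K s} · s!. -/

import Mathlib

open Polynomial Finset Filter Real Topology

noncomputable def herP (n : ℕ) : Polynomial ℝ := (Polynomial.hermite n).map (Int.castRingHom ℝ)

noncomputable def hfun (n : ℕ) : ℝ → ℝ := fun x => (herP n).eval x * Real.exp (-(x^2/2))

noncomputable def Dpoly (n : ℕ) : Polynomial ℝ :=
  derivative (herP (n+1)) * herP n - derivative (herP n) * herP (n+1)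



lemma herP_monic (n : ℕ) : (herP n).Monic := (hermite_monic n).map _

lemma herP_ne_zero (n : ℕ) : herP n ≠ 0 := (herP_monic n).ne_zero

lemma herP_natDegree (n : ℕ) : (herP n).natDegree = n := by
  rw [herP, (hermite_monic n).natDegree_map, natDegree_hermite]

lemma herP_zero : herP 0 = 1 := by simp [herP, hermite_zero]

lemma herP_one : herP 1 = X := by simp [herP, hermite_one]

lemma herP_succ (n : ℕ) : herP (n+1) = X * herP n - derivative (herP n) := by
  rw [herP, hermite_succ]
  simp [Polynomial.map_sub, Polynomial.map_mul, derivative_map, herP]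

lemma derivative_herP (n : ℕ) : derivative (herP (n+1)) = C ((n:ℝ)+1) * herP n := by
  induction n with
  | zero => simp [herP_one, herP_zero]
  | succ n ih =>
    rw [herP_succ (n+1), derivative_sub, derivative_mul, derivative_X, one_mul, ih,
      derivative_mul, derivative_C, zero_mul, zero_add]
    rw [herP_succ n]
    push_cast
    simp only [C_add, C_1, map_add, map_one]
    ring

lemma herP_succ_succ (n : ℕ) : herP (n+2) = X * herP (n+1) - C ((n:ℝ)+1) * herP n := by
  rw [herP_succ (n+1), derivative_herP]


-- (previous lemmas assumed; this file tests new parts with sorried versions)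


lemma Dpoly_succ (n : ℕ) :
    Dpoly (n+1) = C ((n:ℝ)+1) * Dpoly n + (herP (n+1))^2 := by
  have h1 := derivative_herP n
  have h2 := derivative_herP (n+1)
  have h3 := herP_succ (n+1)
  have hd : derivative (herP (n+1+1)) =
      herP (n+1) + X * derivative (herP (n+1)) - derivative (derivative (herP (n+1))) := by
    rw [h3]; simp [derivative_mul]
  have hdd : derivative (derivative (herP (n+1))) = C ((n:ℝ)+1) * derivative (herP n) := by
    rw [h1]; simp [derivative_mul]
  unfold Dpoly
  rw [hd, hdd, h3, h1]
  ring

lemma Dpoly_eval_ge (n : ℕ) (y : ℝ) : (n.factorial : ℝ) ≤ (Dpoly n).eval y := by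
  induction n with
  | zero =>
    simp [Dpoly, herP_zero, herP_one]
  | succ n ih =>
    have h := Dpoly_succ n
    have : (Dpoly (n+1)).eval y = ((n:ℝ)+1) * (Dpoly n).eval y + ((herP (n+1)).eval y)^2 := by
      rw [h]; simp
    rw [this]
    have hsq : (0:ℝ) ≤ ((herP (n+1)).eval y)^2 := sq_nonneg _
    have hn1 : (0:ℝ) < (n:ℝ)+1 := by positivity
    have : ((n+1).factorial : ℝ) = ((n:ℝ)+1) * (n.factorial : ℝ) := by
      push_cast [Nat.factorial_succ]; ring
    rw [this]
    nlinarith [Nat.one_le_iff_ne_zero.mpr (Nat.factorial_ne_zero n), ih]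

lemma herP_parity (n : ℕ) (y : ℝ) :
    (herP n).eval (-y) = (-1)^n * (herP n).eval y ∧
    (herP (n+1)).eval (-y) = (-1)^(n+1) * (herP (n+1)).eval y := by
  induction n with
  | zero => simp [herP_zero, herP_one]
  | succ n ih =>
    refine ⟨ih.2, ?_⟩
    have h := herP_succ_succ n
    have e1 : (herP (n+2)).eval (-y) = -y * (herP (n+1)).eval (-y) - ((n:ℝ)+1) * (herP n).eval (-y) := by
      rw [h]; simp
    have e2 : (herP (n+2)).eval y = y * (herP (n+1)).eval y - ((n:ℝ)+1) * (herP n).eval y := by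
      rw [h]; simp
    rw [show n+1+1 = n+2 from rfl, e1, e2, ih.1, ih.2]
    ring

lemma herP_pos (n : ℕ) (y : ℝ) (hy : 2 * Real.sqrt n ≤ y) :
    0 < (herP n).eval y ∧ y * (herP n).eval y ≤ 2 * (herP (n+1)).eval y := by
  induction n with
  | zero =>
    have : (0:ℝ) ≤ y := by simpa using hy
    constructor
    · simp [herP_zero]
    · simp [herP_zero, herP_one]; linarith
  | succ n ih =>
    have hyn : 2 * Real.sqrt n ≤ y := by
      have : Real.sqrt n ≤ Real.sqrt (n+1) := by
        apply Real.sqrt_le_sqrt; push_cast; linarith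
      push_cast at hy ⊢; linarith
    obtain ⟨hpos, hgrow⟩ := ih hyn
    have hsq : 4 * ((n:ℝ)+1) ≤ y^2 := by
      have h0 : Real.sqrt ((n:ℝ)+1) ^ 2 = (n:ℝ)+1 := Real.sq_sqrt (by positivity)
      have : 2 * Real.sqrt ((n:ℝ)+1) ≤ y := by push_cast at hy; linarith
      nlinarith [Real.sqrt_nonneg ((n:ℝ)+1)]
    have hy0 : (0:ℝ) ≤ y := le_trans (by positivity) hy
    have hy2 : (2:ℝ) ≤ y := by nlinarith
    have hyp : 0 < y := by linarith
    have hp1 : 0 < (herP (n+1)).eval y := by nlinarith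
    refine ⟨hp1, ?_⟩
    have e2 : (herP (n+2)).eval y = y * (herP (n+1)).eval y - ((n:ℝ)+1) * (herP n).eval y := by
      rw [herP_succ_succ n]; simp
    -- y * P_{n+1} ≤ 2 * (y P_{n+1} - (n+1) P_n) iff 2(n+1)P_n ≤ y P_{n+1}
    rw [show n+1+1 = n+2 from rfl, e2]
    -- from hgrow : y P_n ≤ 2 P_{n+1}, so (n+1) P_n ≤ 2(n+1)P_{n+1}/y ≤ ...
    nlinarith

lemma herP_root_bound {n : ℕ} {x : ℝ} (hx : x ∈ (herP n).roots) : |x| ≤ 2 * Real.sqrt n := by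
  by_contra h
  push_neg at h
  have hx0 : (herP n).eval x = 0 := (mem_roots (herP_ne_zero n)).1 hx
  rcases abs_cases x with ⟨he, _⟩ | ⟨he, _⟩
  · have := (herP_pos n x (by rw [← he]; exact le_of_lt h)).1
    rw [hx0] at this; exact lt_irrefl 0 this
  · have h2 : 2 * Real.sqrt n ≤ -x := by rw [← he]; exact le_of_lt h
    have := (herP_pos n (-x) h2).1
    have hp := (herP_parity n x).1
    rw [hp, hx0, mul_zero] at this
    exact lt_irrefl 0 this


-- general Rolle at infinity
lemma rolle_atTop {f : ℝ → ℝ} (hf : Differentiable ℝ f) {a b : ℝ} (hab : a < b)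
    (ha : f a = 0) (hb : f b ≠ 0) (htop : Tendsto f atTop (𝓝 0)) :
    ∃ c, a < c ∧ deriv f c = 0 := by
  set m := |f b| with hm
  have hm0 : 0 < m := abs_pos.mpr hb
  have : ∀ᶠ x in atTop, |f x| ≤ m/2 := by
    have := htop.abs
    simp only [abs_zero] at this
    exact this.eventually_le_const (by linarith)
  obtain ⟨M, hM⟩ := eventually_atTop.mp this
  set M' := max M (b+1) with hM'
  have hbM : b ≤ M' := le_trans (by linarith) (le_max_right _ _)
  have haM : a < M' := lt_of_lt_of_le hab hbM
  have hMM : M ≤ M' := le_max_left _ _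
  -- maximize f^2 on [a, M']
  obtain ⟨c, hcmem, hcmax⟩ := IsCompact.exists_isMaxOn (isCompact_Icc (a := a) (b := M'))
    (Set.nonempty_Icc.mpr haM.le) ((hf.continuous.mul hf.continuous).continuousOn)
  have hcb : m^2 ≤ f c * f c := by
    have := hcmax (Set.mem_Icc.mpr ⟨hab.le, hbM⟩)
    simp only at this
    calc m^2 = f b * f b := by rw [hm, sq_abs, sq]
    _ ≤ f c * f c := this
  have hca : a < c := by
    rcases lt_or_eq_of_le (Set.mem_Icc.mp hcmem).1 with h | h
    · exact h
    · exfalso; rw [← h, ha] at hcb; nlinarith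
  have hcM : c < M' := by
    rcases lt_or_eq_of_le (Set.mem_Icc.mp hcmem).2 with h | h
    · exact h
    · exfalso
      have := hM M' hMM
      rw [← h] at this
      nlinarith [abs_nonneg (f c), sq_abs (f c), abs_mul_abs_self (f c)]
  have hloc : IsLocalMax (fun x => f x * f x) c :=
    hcmax.isLocalMax (Icc_mem_nhds hca hcM)
  have hd : deriv (fun x => f x * f x) c = 0 := hloc.deriv_eq_zero
  have hder : deriv (fun x => f x * f x) c = 2 * f c * deriv f c := by
    have h1 : HasDerivAt f (deriv f c) c := (hf c).hasDerivAt
    have := h1.mul h1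
    rw [show (fun x => f x * f x) = f * f from rfl, this.deriv]; ring
  have hfc : f c ≠ 0 := by intro h0; rw [h0] at hcb; nlinarith
  refine ⟨c, hca, ?_⟩
  rw [hder] at hd
  rcases mul_eq_zero.mp hd with h | h
  · exact absurd (mul_eq_zero.mp h) (by push_neg; exact ⟨two_ne_zero, hfc⟩)
  · exact h

lemma rolle_atBot {f : ℝ → ℝ} (hf : Differentiable ℝ f) {a b : ℝ} (hab : b < a)
    (ha : f a = 0) (hb : f b ≠ 0) (hbot : Tendsto f atBot (𝓝 0)) :
    ∃ c, c < a ∧ deriv f c = 0 := by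
  obtain ⟨c, hc, hd⟩ := rolle_atTop (f := fun x => f (-x))
    (hf.comp differentiable_neg) (a := -a) (b := -b) (by linarith)
    (by simpa) (by simpa) (hbot.comp tendsto_neg_atTop_atBot)
  refine ⟨-c, by linarith, ?_⟩
  rw [deriv_comp_neg] at hd
  simpa using hd




lemma hfun_hasDerivAt (n : ℕ) (x : ℝ) :
    HasDerivAt (hfun n) (-((herP (n+1)).eval x * Real.exp (-(x^2/2)))) x := by
  have hp : HasDerivAt (fun y => (herP n).eval y) ((derivative (herP n)).eval x) x :=
    (herP n).hasDerivAt x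
  have hinner : HasDerivAt (fun y : ℝ => -(y^2/2)) (-x) x := by
    exact (((hasDerivAt_pow 2 x).div_const 2).neg).congr_deriv (by norm_num)
  have he : HasDerivAt (fun y : ℝ => Real.exp (-(y^2/2)))
      (Real.exp (-(x^2/2)) * (-x)) x := hinner.exp
  have := hp.mul he
  refine HasDerivAt.congr_deriv this ?_
  have : (herP (n+1)).eval x = x * (herP n).eval x - (derivative (herP n)).eval x := by
    rw [herP_succ n]; simp
  rw [this]; ring

lemma hfun_differentiable (n : ℕ) : Differentiable ℝ (hfun n) :=
  fun x => (hfun_hasDerivAt n x).differentiableAt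

lemma hfun_deriv (n : ℕ) (x : ℝ) :
    deriv (hfun n) x = -((herP (n+1)).eval x * Real.exp (-(x^2/2))) :=
  (hfun_hasDerivAt n x).deriv

lemma root_of_deriv_zero {n : ℕ} {x : ℝ} (h : deriv (hfun n) x = 0) :
    (herP (n+1)).eval x = 0 := by
  rw [hfun_deriv] at h
  have := Real.exp_ne_zero (-(x^2/2))
  rw [neg_eq_zero] at h
  rcases mul_eq_zero.mp h with h' | h'
  · exact h'
  · exact absurd h' (Real.exp_ne_zero _)

lemma hfun_tendsto_atTop (n : ℕ) : Tendsto (hfun n) atTop (𝓝 0) := by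
  apply squeeze_zero_norm' (a := fun x => |(herP n).eval x| / Real.exp x)
  · filter_upwards [eventually_ge_atTop (2:ℝ)] with x hx
    have h1 : Real.exp (-(x^2/2)) ≤ Real.exp (-x) := by
      apply Real.exp_le_exp.mpr; nlinarith
    have h2 : (0:ℝ) ≤ |(herP n).eval x| := abs_nonneg _
    calc ‖hfun n x‖ = |(herP n).eval x| * Real.exp (-(x^2/2)) := by
          rw [hfun]; rw [Real.norm_eq_abs, abs_mul, abs_of_pos (Real.exp_pos _)]
      _ ≤ |(herP n).eval x| * Real.exp (-x) := by
          exact mul_le_mul_of_nonneg_left h1 h2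
      _ = |(herP n).eval x| / Real.exp x := by
          rw [Real.exp_neg]; ring
  · have := (Polynomial.tendsto_div_exp_atTop (herP n)).abs
    simp only [abs_zero] at this
    apply this.congr
    intro x
    rw [abs_div, abs_of_pos (Real.exp_pos _)]

lemma hfun_tendsto_atBot (n : ℕ) : Tendsto (hfun n) atBot (𝓝 0) := by
  have key : Tendsto (fun x => hfun n (-x)) atTop (𝓝 0) := by
    have heq : (fun x => hfun n (-x)) =
        fun x => ((herP n).comp (-X)).eval x * Real.exp (-(x^2/2)) := by
      funext x; simp [hfun, eval_comp]
    rw [heq]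
    -- same squeeze as before with polynomial (herP n).comp (-X)
    apply squeeze_zero_norm' (a := fun x => |((herP n).comp (-X)).eval x| / Real.exp x)
    · filter_upwards [eventually_ge_atTop (2:ℝ)] with x hx
      have h1 : Real.exp (-(x^2/2)) ≤ Real.exp (-x) := by
        apply Real.exp_le_exp.mpr; nlinarith
      calc ‖((herP n).comp (-X)).eval x * Real.exp (-(x^2/2))‖
          = |((herP n).comp (-X)).eval x| * Real.exp (-(x^2/2)) := by
            rw [Real.norm_eq_abs, abs_mul, abs_of_pos (Real.exp_pos _)]
        _ ≤ |((herP n).comp (-X)).eval x| * Real.exp (-x) :=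
            mul_le_mul_of_nonneg_left h1 (abs_nonneg _)
        _ = |((herP n).comp (-X)).eval x| / Real.exp x := by rw [Real.exp_neg]; ring
    · have := (Polynomial.tendsto_div_exp_atTop ((herP n).comp (-X))).abs
      simp only [abs_zero] at this
      apply this.congr
      intro x
      rw [abs_div, abs_of_pos (Real.exp_pos _)]
  have : Tendsto (fun x => hfun n (-(-x))) atBot (𝓝 0) :=
    key.comp tendsto_neg_atBot_atTop
  simpa using this



lemma hfun_zero_of_root {n : ℕ} {r : ℝ} (hr : r ∈ (herP n).roots.toFinset) : hfun n r = 0 := by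
  have : (herP n).eval r = 0 := (mem_roots (herP_ne_zero n)).1 (Multiset.mem_toFinset.1 hr)
  simp [hfun, this]

lemma hfun_ne_zero_far (n : ℕ) {y : ℝ} (hy : 2 * Real.sqrt n ≤ |y|) : hfun n y ≠ 0 := by
  have : (herP n).eval y ≠ 0 := by
    rcases abs_cases y with ⟨he, _⟩ | ⟨he, _⟩
    · rw [he] at hy; exact ne_of_gt (herP_pos n y hy).1
    · rw [he] at hy
      have := (herP_pos n (-y) hy).1
      have hp := (herP_parity n y).1
      intro h0
      rw [hp, h0, mul_zero] at this
      exact lt_irrefl 0 this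
  simp [hfun, this, Real.exp_ne_zero]

lemma card_roots_ge (n : ℕ) (hn : 1 ≤ n) : n ≤ (herP n).roots.toFinset.card := by
  induction n with
  | zero => omega
  | succ n ih =>
    rcases Nat.eq_or_lt_of_le hn with h1 | h2
    · -- n + 1 = 1, i.e. n = 0 : herP 1 = X has root 0
      have hn0 : n = 0 := by omega
      subst hn0
      have : (herP 1).roots = {0} := by rw [herP_one, roots_X]
      rw [this]
      simp
    · have hn1 : 1 ≤ n := by omega
      have hF := ih hn1
      set F := (herP n).roots.toFinset with hFdef
      have hFne : F.Nonempty := by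
        rw [← Finset.card_pos]; omega
      -- key: each root r of herP n produces a root of herP (n+1) to its right,
      -- before the next root of herP n.
      have key : ∀ r ∈ F, ∃ z, r < z ∧ (∀ r' ∈ F, r < r' → z < r') ∧ (herP (n+1)).eval z = 0 := by
        intro r hr
        by_cases hfil : (F.filter (fun x => r < x)).Nonempty
        · -- interior Rolle between r and the next root
          set r' := (F.filter (fun x => r < x)).min' hfil with hr'def
          have hr'mem := (F.filter (fun x => r < x)).min'_mem hfil
          rw [Finset.mem_filter] at hr'mem
          obtain ⟨hr'F, hrr'⟩ := hr'mem
          have h0 : hfun n r = hfun n r' := by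
            rw [hfun_zero_of_root hr, hfun_zero_of_root hr'F]
          obtain ⟨c, hc, hd⟩ := exists_deriv_eq_zero hrr'
            ((hfun_differentiable n).continuous.continuousOn) h0
          refine ⟨c, hc.1, ?_, root_of_deriv_zero hd⟩
          intro r'' hr'' hlt
          have : r' ≤ r'' := Finset.min'_le _ _ (Finset.mem_filter.mpr ⟨hr'', hlt⟩)
          exact lt_of_lt_of_le hc.2 this
        · -- r is the largest root; Rolle at +∞
          have hb : hfun n (1 + max r (2 * Real.sqrt n)) ≠ 0 := by
            apply hfun_ne_zero_far
            have h1 : 2 * Real.sqrt n ≤ 1 + max r (2 * Real.sqrt n) := by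
              have := le_max_right r (2 * Real.sqrt n); linarith
            have h2 : (0:ℝ) ≤ 1 + max r (2 * Real.sqrt n) := by
              have := Real.sqrt_nonneg (n:ℝ); have := le_max_right r (2 * Real.sqrt n); linarith
            rw [abs_of_nonneg h2]; exact h1
          obtain ⟨c, hc, hd⟩ := rolle_atTop (hfun_differentiable n)
            (lt_of_le_of_lt (le_max_left r _) (by linarith : max r (2 * Real.sqrt n) < 1 + max r (2 * Real.sqrt n)))
            (hfun_zero_of_root hr) hb (hfun_tendsto_atTop n)
          refine ⟨c, hc, ?_, root_of_deriv_zero hd⟩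
          intro r'' hr'' hlt
          exfalso
          exact hfil ⟨r'', Finset.mem_filter.mpr ⟨hr'', hlt⟩⟩
      choose! c hc1 hc2 hc3 using key
      -- a root to the left of the minimum
      have hminmem := F.min'_mem hFne
      have hbneg : hfun n (min (F.min' hFne) (-(2 * Real.sqrt n)) - 1) ≠ 0 := by
        apply hfun_ne_zero_far
        have h1 : min (F.min' hFne) (-(2 * Real.sqrt n)) - 1 ≤ -(2 * Real.sqrt n) - 1 := by
          have := min_le_right (F.min' hFne) (-(2 * Real.sqrt n)); linarith
        have hs := Real.sqrt_nonneg (n:ℝ)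
        rw [abs_of_nonpos (by linarith)]
        linarith
      obtain ⟨c₀, hc₀, hd₀⟩ := rolle_atBot (hfun_differentiable n)
        (by
          have := min_le_left (F.min' hFne) (-(2 * Real.sqrt n))
          linarith : min (F.min' hFne) (-(2 * Real.sqrt n)) - 1 < F.min' hFne)
        (hfun_zero_of_root hminmem) hbneg (hfun_tendsto_atBot n)
      have hc₀root : (herP (n+1)).eval c₀ = 0 := root_of_deriv_zero hd₀
      -- assemble
      have hinj : ∀ r ∈ F, ∀ r' ∈ F, c r = c r' → r = r' := by
        intro r hr r' hr' hee
        by_contra hne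
        rcases lt_or_gt_of_ne hne with h | h
        · linarith [hc2 r hr r' hr' h, hc1 r' hr', hee]
        · linarith [hc2 r' hr' r hr h, hc1 r hr, hee]
      have himage : F.card = (F.image c).card := by
        rw [Finset.card_image_of_injOn]
        intro r hr r' hr' hee
        exact hinj r hr r' hr' hee
      have hsub : insert c₀ (F.image c) ⊆ (herP (n+1)).roots.toFinset := by
        intro z hz
        rw [Finset.mem_insert] at hz
        rw [Multiset.mem_toFinset, mem_roots (herP_ne_zero (n+1))]
        rcases hz with h | h
        · subst h; exact hc₀root
        · obtain ⟨r, hr, hrz⟩ := Finset.mem_image.mp h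
          rw [← hrz]; exact hc3 r hr
      have hc₀notmem : c₀ ∉ F.image c := by
        intro hmem
        obtain ⟨r, hr, hrz⟩ := Finset.mem_image.mp hmem
        have h1 : F.min' hFne ≤ r := Finset.min'_le _ _ hr
        have h2 := hc1 r hr
        rw [hrz] at h2
        linarith
      have hcard : (insert c₀ (F.image c)).card = F.card + 1 := by
        rw [Finset.card_insert_of_notMem hc₀notmem, ← himage]
      have := Finset.card_le_card hsub
      rw [hcard] at this
      omega



-- splitting of herP n for n ≥ 1
lemma herP_card_roots (n : ℕ) (hn : 1 ≤ n) :
    Multiset.card (herP n).roots = n ∧ (herP n).roots.toFinset.card = n := by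
  have h1 := card_roots_ge n hn
  have h2 : (herP n).roots.toFinset.card ≤ Multiset.card (herP n).roots :=
    Multiset.toFinset_card_le _
  have h3 := (herP n).card_roots'
  rw [herP_natDegree] at h3
  omega

lemma herP_eq_prod (n : ℕ) (hn : 1 ≤ n) :
    herP n = ∏ r ∈ (herP n).roots.toFinset, (X - C r) := by
  obtain ⟨h1, h2⟩ := herP_card_roots n hn
  have hnodup : (herP n).roots.Nodup := by
    rw [← Multiset.toFinset_card_eq_card_iff_nodup]; omega
  have hsplit := prod_multiset_X_sub_C_of_monic_of_roots_card_eq (herP_monic n)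
    (by rw [herP_natDegree]; exact h1)
  conv_lhs => rw [← hsplit]
  rw [Finset.prod_eq_multiset_prod]
  congr 1
  rw [Multiset.toFinset_val, Multiset.dedup_eq_self.mpr hnodup]

-- denominator identity + lower bound
lemma denom_eq (s : ℕ) (y₀ : ℝ) (hy₀ : y₀ ∈ (herP (s+1)).roots.toFinset) :
    ∏ y' ∈ ((herP (s+1)).roots.toFinset).erase y₀, (y₀ - y') =
      ((s:ℝ)+1) * (herP s).eval y₀ := by
  have hprod := herP_eq_prod (s+1) (by omega)
  have hderiv : (derivative (herP (s+1))).eval y₀ = ((s:ℝ)+1) * (herP s).eval y₀ := by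
    rw [derivative_herP]; simp
  rw [← hderiv]
  have hnodal : herP (s+1) = Lagrange.nodal ((herP (s+1)).roots.toFinset) id := by
    rw [Lagrange.nodal]; simpa using hprod
  have : (derivative (herP (s+1))).eval y₀
      = (derivative (Lagrange.nodal ((herP (s+1)).roots.toFinset) id)).eval y₀ := by
    rw [← hnodal]
  have h2 := Lagrange.eval_nodal_derivative_eval_node_eq
    (s := (herP (s+1)).roots.toFinset) (v := id) (i := y₀) hy₀
  rw [Lagrange.eval_nodal] at h2
  simp only [id] at h2
  rw [this, h2]

lemma denom_ge_one (s : ℕ) (y₀ : ℝ) (hy₀ : y₀ ∈ (herP (s+1)).roots.toFinset) :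
    1 ≤ |∏ y' ∈ ((herP (s+1)).roots.toFinset).erase y₀, (y₀ - y')| := by
  rw [denom_eq s y₀ hy₀]
  have hroot : (herP (s+1)).eval y₀ = 0 :=
    (mem_roots (herP_ne_zero (s+1))).1 (Multiset.mem_toFinset.1 hy₀)
  have hD := Dpoly_eval_ge s y₀
  have hDval : (Dpoly s).eval y₀ = ((s:ℝ)+1) * ((herP s).eval y₀)^2 := by
    rw [Dpoly, eval_sub, eval_mul, eval_mul, hroot, mul_zero, sub_zero, derivative_herP]
    simp; ring
  rw [hDval] at hD
  have hfac : (1:ℝ) ≤ (s.factorial : ℝ) := by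
    exact_mod_cast Nat.one_le_iff_ne_zero.mpr (Nat.factorial_ne_zero s)
  have hs1 : (1:ℝ) ≤ (s:ℝ)+1 := by
    have := Nat.cast_nonneg (α:=ℝ) s; linarith
  rw [abs_mul, abs_of_pos (by positivity : (0:ℝ) < (s:ℝ)+1)]
  nlinarith [abs_nonneg ((herP s).eval y₀), sq_abs ((herP s).eval y₀)]


lemma coeff_abs_sum (G : Finset ℝ) :
    ∑ ℓ ∈ range (G.card + 1), |(∏ a ∈ G, (X - C a)).coeff ℓ| ≤ ∏ a ∈ G, (1 + |a|) := by
  induction G using Finset.induction_on with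
  | empty => simp
  | @insert a G ha ih =>
    rw [Finset.prod_insert ha, Finset.prod_insert ha, Finset.card_insert_of_notMem ha]
    set P := ∏ b ∈ G, (X - C b) with hP
    have hdeg : P.natDegree ≤ G.card := by
      refine le_trans (natDegree_prod_le _ _) ?_
      apply le_of_eq
      rw [Finset.sum_congr rfl (fun b _ => natDegree_X_sub_C b)]
      simp
    have hcoeffP : P.coeff (G.card + 1) = 0 :=
      coeff_eq_zero_of_natDegree_lt (by omega)
    have hexpand : ∀ ℓ, ((X - C a) * P).coeff ℓ = (X * P).coeff ℓ - a * P.coeff ℓ := by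
      intro ℓ
      rw [sub_mul, coeff_sub, coeff_C_mul]
    have hbound : ∀ ℓ, |((X - C a) * P).coeff ℓ| ≤ |(X * P).coeff ℓ| + |a| * |P.coeff ℓ| := by
      intro ℓ
      rw [hexpand ℓ, ← abs_mul]
      exact abs_sub _ _
    calc ∑ ℓ ∈ range (G.card + 1 + 1), |((X - C a) * P).coeff ℓ|
        ≤ ∑ ℓ ∈ range (G.card + 1 + 1), (|(X * P).coeff ℓ| + |a| * |P.coeff ℓ|) :=
          Finset.sum_le_sum (fun ℓ _ => hbound ℓ)
      _ = (∑ ℓ ∈ range (G.card + 1 + 1), |(X * P).coeff ℓ|)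
          + |a| * ∑ ℓ ∈ range (G.card + 1 + 1), |P.coeff ℓ| := by
          rw [Finset.sum_add_distrib, Finset.mul_sum]
      _ = (∑ ℓ ∈ range (G.card + 1), |P.coeff ℓ|)
          + |a| * ∑ ℓ ∈ range (G.card + 1), |P.coeff ℓ| := by
          congr 1
          · refine (Finset.sum_range_succ' (fun ℓ => |(X * P).coeff ℓ|) (G.card + 1)).trans ?_
            simp [coeff_X_mul, mul_coeff_zero]
          · congr 1
            rw [Finset.sum_range_succ, hcoeffP]
            simp
      _ = (1 + |a|) * ∑ ℓ ∈ range (G.card + 1), |P.coeff ℓ| := by ring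
      _ ≤ (1 + |a|) * ∏ b ∈ G, (1 + |b|) := by
          apply mul_le_mul_of_nonneg_left ih
          positivity

lemma pow_le_factorial_mul_exp (n : ℕ) : (n:ℝ)^n ≤ (n.factorial : ℝ) * Real.exp n := by
  induction n with
  | zero => simp
  | succ n ih =>
    rcases Nat.eq_zero_or_pos n with h0 | hpos
    · subst h0
      simp only [Nat.cast_zero, zero_add, Nat.cast_one, pow_one, Nat.factorial_one,
        Nat.cast_one, one_mul]
      nlinarith [Real.add_one_le_exp (1:ℝ)]
    · have hn1 : (1:ℝ) ≤ (n:ℝ) := by exact_mod_cast hpos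
      have key : ((n:ℝ)+1)^n ≤ Real.exp 1 * (n:ℝ)^n := by
        have h1 : ((n:ℝ)+1) ≤ (n:ℝ) * Real.exp (1/(n:ℝ)) := by
          have := Real.add_one_le_exp (1/(n:ℝ))
          have hn0 : (0:ℝ) < n := by linarith
          calc ((n:ℝ)+1) = (n:ℝ) * (1/(n:ℝ) + 1) := by
                field_simp; ring
            _ ≤ (n:ℝ) * Real.exp (1/(n:ℝ)) := by
                apply mul_le_mul_of_nonneg_left this (le_of_lt hn0)
        calc ((n:ℝ)+1)^n ≤ ((n:ℝ) * Real.exp (1/(n:ℝ)))^n := by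
              apply pow_le_pow_left₀ (by linarith) h1
          _ = (n:ℝ)^n * (Real.exp (1/(n:ℝ)))^n := mul_pow _ _ _
          _ = (n:ℝ)^n * Real.exp 1 := by
              rw [← Real.exp_nat_mul]
              congr 1
              field_simp
          _ = Real.exp 1 * (n:ℝ)^n := by ring
      have hfact : ((n+1).factorial : ℝ) = ((n:ℝ)+1) * (n.factorial : ℝ) := by
        push_cast [Nat.factorial_succ]; ring
      have hexp : Real.exp ((n:ℕ)+1 : ℕ) = Real.exp 1 * Real.exp n := by
        push_cast
        rw [← Real.exp_add]; ring_nf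
      push_cast
      calc ((n:ℝ)+1)^(n+1) = ((n:ℝ)+1) * ((n:ℝ)+1)^n := by ring
        _ ≤ ((n:ℝ)+1) * (Real.exp 1 * (n:ℝ)^n) := by
            apply mul_le_mul_of_nonneg_left key (by linarith)
        _ ≤ ((n:ℝ)+1) * (Real.exp 1 * ((n.factorial : ℝ) * Real.exp n)) := by
            apply mul_le_mul_of_nonneg_left _ (by linarith)
            apply mul_le_mul_of_nonneg_left ih (le_of_lt (Real.exp_pos 1))
        _ = (((n:ℝ)+1) * (n.factorial : ℝ)) * (Real.exp 1 * Real.exp n) := by ring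
        _ = ((n+1).factorial : ℝ) * Real.exp ((n:ℝ)+1) := by
            rw [hfact, ← Real.exp_add]
            push_cast
            ring_nf


/-- The Lagrange basis polynomial associated with the root `y₀` of the
probabilist Hermite polynomial `He_{s+1}`:
`L_{s;y₀} = ∏_{y' root of He_{s+1}, y' ≠ y₀} (X - y')/(y₀ - y')`. -/
noncomputable def lagrangeHermitePoly (s : ℕ) (y₀ : ℝ) : Polynomial ℝ :=
  ∏ y' ∈ ((((Polynomial.hermite (s + 1)).map (Int.castRingHom ℝ)).roots).toFinset).erase y₀,
    Polynomial.C (y₀ - y')⁻¹ * (Polynomial.X - Polynomial.C y')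

/-- Lemma A.6: there is `K > 0` such that for every `s ≥ 1` and
every root `y₀` of `He_{s+1}`, the coefficients of the Lagrange basis
polynomial `L_{s;y₀}` satisfy `∑_{ℓ=0}^{s} |coeff_ℓ(L_{s;y₀})| ≤ e^{Ks} · s!`. -/
theorem stmt_13 :
    ∃ K > (0 : ℝ), ∀ s : ℕ, 1 ≤ s →
      ∀ y₀ ∈ (((Polynomial.hermite (s + 1)).map (Int.castRingHom ℝ)).roots).toFinset,
        ∑ ℓ ∈ Finset.range (s + 1), |(lagrangeHermitePoly s y₀).coeff ℓ| ≤
          Real.exp (K * s) * (s.factorial) := by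
  refine ⟨3, by norm_num, ?_⟩
  intro s hs y₀ hy₀
  have hy₀' : y₀ ∈ (herP (s+1)).roots.toFinset := hy₀
  set F := (herP (s+1)).roots.toFinset with hF
  set E := F.erase y₀ with hE
  -- cardinality of E
  have hFcard : F.card = s + 1 := (herP_card_roots (s+1) (by omega)).2
  have hEcard : E.card = s := by
    rw [hE, Finset.card_erase_of_mem hy₀', hFcard]
    omega
  -- decompose L
  have hL : lagrangeHermitePoly s y₀ =
      C (∏ y' ∈ E, (y₀ - y')⁻¹) * ∏ y' ∈ E, (X - C y') := by
    show (∏ y' ∈ E, (C (y₀ - y')⁻¹ * (X - C y'))) = _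
    rw [map_prod, ← Finset.prod_mul_distrib]
  have hcoeff : ∀ ℓ, (lagrangeHermitePoly s y₀).coeff ℓ =
      (∏ y' ∈ E, (y₀ - y')⁻¹) * (∏ y' ∈ E, (X - C y')).coeff ℓ := by
    intro ℓ; rw [hL, coeff_C_mul]
  have habs : ∀ ℓ, |(lagrangeHermitePoly s y₀).coeff ℓ| =
      |∏ y' ∈ E, (y₀ - y')⁻¹| * |(∏ y' ∈ E, (X - C y')).coeff ℓ| := by
    intro ℓ; rw [hcoeff, abs_mul]
  have hdinv : |∏ y' ∈ E, (y₀ - y')⁻¹| ≤ 1 := by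
    rw [Finset.prod_inv_distrib, abs_inv]
    have h1 := denom_ge_one s y₀ hy₀'
    rw [inv_le_one_iff₀]
    right; exact h1
  -- sum bound
  have hsum : ∑ ℓ ∈ Finset.range (s + 1), |(lagrangeHermitePoly s y₀).coeff ℓ|
      ≤ ∏ y' ∈ E, (1 + |y'|) := by
    calc ∑ ℓ ∈ Finset.range (s + 1), |(lagrangeHermitePoly s y₀).coeff ℓ|
        = |∏ y' ∈ E, (y₀ - y')⁻¹| * ∑ ℓ ∈ Finset.range (s + 1), |(∏ y' ∈ E, (X - C y')).coeff ℓ| := by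
          rw [Finset.mul_sum]
          exact Finset.sum_congr rfl (fun ℓ _ => habs ℓ)
      _ ≤ 1 * ∑ ℓ ∈ Finset.range (s + 1), |(∏ y' ∈ E, (X - C y')).coeff ℓ| := by
          apply mul_le_mul_of_nonneg_right hdinv
          positivity
      _ = ∑ ℓ ∈ Finset.range (E.card + 1), |(∏ y' ∈ E, (X - C y')).coeff ℓ| := by
          rw [one_mul, hEcard]
      _ ≤ ∏ y' ∈ E, (1 + |y'|) := coeff_abs_sum E
  -- each root bounded
  have hroots : ∀ y' ∈ E, 1 + |y'| ≤ 1 + 2 * Real.sqrt (s+1) := by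
    intro y' hy'
    have : y' ∈ (herP (s+1)).roots := by
      have := Finset.mem_of_mem_erase hy'
      exact Multiset.mem_toFinset.1 this
    have := herP_root_bound this
    push_cast at this ⊢
    linarith
  have hprod : ∏ y' ∈ E, (1 + |y'|) ≤ (1 + 2 * Real.sqrt (s+1))^s := by
    calc ∏ y' ∈ E, (1 + |y'|) ≤ ∏ y' ∈ E, (1 + 2 * Real.sqrt (s+1)) := by
          apply Finset.prod_le_prod (fun i _ => by positivity) hroots
      _ = (1 + 2 * Real.sqrt (s+1))^s := by rw [Finset.prod_const, hEcard]
  -- arithmetic: (1 + 2√(s+1))^s ≤ (4s)^s ≤ exp(3s) s!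
  have hbase : 1 + 2 * Real.sqrt ((s:ℝ)+1) ≤ 4 * s := by
    have ht : Real.sqrt ((s:ℝ)+1) ^ 2 = (s:ℝ)+1 := Real.sq_sqrt (by positivity)
    have ht0 : 0 ≤ Real.sqrt ((s:ℝ)+1) := Real.sqrt_nonneg _
    have hs1 : (1:ℝ) ≤ s := by exact_mod_cast hs
    nlinarith [sq_nonneg (Real.sqrt ((s:ℝ)+1) - 1)]
  have hpow : (1 + 2 * Real.sqrt ((s:ℝ)+1))^s ≤ (4 * (s:ℝ))^s := by
    apply pow_le_pow_left₀ (by positivity) hbase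
  have hfin : (4 * (s:ℝ))^s ≤ Real.exp (3 * s) * (s.factorial : ℝ) := by
    have h4 : (4:ℝ)^s ≤ Real.exp (2 * s) := by
      have he2 : (4:ℝ) ≤ Real.exp 2 := by
        have h1 : (2:ℝ) ≤ Real.exp 1 := by
          have := Real.add_one_le_exp (1:ℝ); linarith
        have := Real.exp_pos 1
        calc (4:ℝ) = 2 * 2 := by norm_num
          _ ≤ Real.exp 1 * Real.exp 1 := by nlinarith
          _ = Real.exp 2 := by rw [← Real.exp_add]; norm_num
      calc (4:ℝ)^s ≤ (Real.exp 2)^s := pow_le_pow_left₀ (by norm_num) he2 s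
        _ = Real.exp (2 * s) := by
            rw [← Real.exp_nat_mul]; ring_nf
    have hss : (s:ℝ)^s ≤ (s.factorial : ℝ) * Real.exp s := pow_le_factorial_mul_exp s
    calc (4 * (s:ℝ))^s = (4:ℝ)^s * (s:ℝ)^s := mul_pow _ _ _
      _ ≤ Real.exp (2 * s) * ((s.factorial : ℝ) * Real.exp s) := by
          apply mul_le_mul h4 hss (by positivity) (le_of_lt (Real.exp_pos _))
      _ = Real.exp (3 * s) * (s.factorial : ℝ) := by
          rw [show (3:ℝ) * s = 2 * s + s by ring, Real.exp_add]
          ring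
  calc ∑ ℓ ∈ Finset.range (s + 1), |(lagrangeHermitePoly s y₀).coeff ℓ|
      ≤ ∏ y' ∈ E, (1 + |y'|) := hsum
    _ ≤ (1 + 2 * Real.sqrt ((s:ℝ)+1))^s := by push_cast at hprod ⊢; exact hprod
    _ ≤ (4 * (s:ℝ))^s := hpow
    _ ≤ Real.exp (3 * s) * (s.factorial : ℝ) := hfin
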